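/- For every x ∈ Ω, the ℓ²-norm of K_X^{-1} k_X(x) satisfies ‖K_X^{-1} k_X(x)‖₂ = sup{ |f(x)| / ‖f_X‖₂ : f ∈ V_X, f ≠ 0 } ≤ ‖k‖_∞^{1/2} · ‖K_X^{-1}‖_{2→2}^{1/2}, where ‖K_X^{-1}‖_{2→2} is the spectral norm of K_X^{-1}. -/

import Mathlib

open MeasureTheory Matrix
open scoped RealInnerProductSpace

noncomputable section

/-- The kernel matrix `K_X = (k(x_i,x_j))_{i,j}` built from the feature map `Φ`. -/
def kerMatrix {n : ℕ} {H : Type*} [NormedAddCommGroup H] [InnerProductSpace ℝ H]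
    (Φ : EuclideanSpace ℝ (Fin n) → H) (d : ℕ) (x : Fin d → EuclideanSpace ℝ (Fin n)) :
    Matrix (Fin d) (Fin d) ℝ :=
  Matrix.of fun i j => ⟪Φ (x i), Φ (x j)⟫

/-- The kernel vector `k_X(z) = (k(x_1,z),…,k(x_d,z))ᵀ`. -/
def kerVec {n : ℕ} {H : Type*} [NormedAddCommGroup H] [InnerProductSpace ℝ H]
    (Φ : EuclideanSpace ℝ (Fin n) → H) (d : ℕ) (x : Fin d → EuclideanSpace ℝ (Fin n))
    (z : EuclideanSpace ℝ (Fin n)) : Fin d → ℝ :=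
  fun i => ⟪Φ (x i), Φ z⟫

/-- For every `x ∈ Ω`,
`‖K_X⁻¹ k_X(x)‖₂ = sup{ |f(x)|/‖f_X‖₂ : f ∈ V_X, f ≠ 0 } ≤ ‖k‖_∞^{1/2} · ‖K_X⁻¹‖_{2→2}^{1/2}`,
where `Cop` is (a bound for) the spectral norm of `K_X⁻¹`. -/
theorem kernel_interpolation_vector_l2_bound
    {n : ℕ}
    (Ω : Set (EuclideanSpace ℝ (Fin n)))
    (hΩne : Ω.Nonempty) (hΩopen : IsOpen Ω) (hΩbdd : Bornology.IsBounded Ω)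
    {H : Type*} [NormedAddCommGroup H] [InnerProductSpace ℝ H] [CompleteSpace H]
    (ev : H →ₗ[ℝ] (EuclideanSpace ℝ (Fin n) → ℝ))
    (Φ : EuclideanSpace ℝ (Fin n) → H)
    (hrepr : ∀ (f : H), ∀ x ∈ Ω, ev f x = ⟪f, Φ x⟫)
    (hΦcont : ContinuousOn Φ Ω)
    (Mk : ℝ) (hMk : ∀ x ∈ Ω, ∀ y ∈ Ω, |⟪Φ x, Φ y⟫| ≤ Mk)
    (d : ℕ) (hd : 1 ≤ d) (x : Fin d → EuclideanSpace ℝ (Fin n))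
    (hxΩ : ∀ i, x i ∈ Ω) (hxinj : Function.Injective x)
    (hKXpos : (kerMatrix Φ d x).PosDef)
    -- `Cop` is the spectral norm of `K_X⁻¹` (any upper bound suffices)
    (Cop : ℝ)
    (hCop : ∀ v : Fin d → ℝ,
      Real.sqrt (∑ i, (((kerMatrix Φ d x)⁻¹ *ᵥ v) i) ^ 2) ≤
        Cop * Real.sqrt (∑ i, (v i) ^ 2))
    (xx : EuclideanSpace ℝ (Fin n)) (hxx : xx ∈ Ω) :
    Real.sqrt (∑ i, (((kerMatrix Φ d x)⁻¹ *ᵥ kerVec Φ d x xx) i) ^ 2) =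
      sSup {r : ℝ | ∃ f : H,
        f ∈ Submodule.span ℝ (Set.range fun i => Φ (x i)) ∧ f ≠ 0 ∧
        r = |ev f xx| / Real.sqrt (∑ j, (ev f (x j)) ^ 2)} ∧
    Real.sqrt (∑ i, (((kerMatrix Φ d x)⁻¹ *ᵥ kerVec Φ d x xx) i) ^ 2) ≤
      Real.sqrt Mk * Real.sqrt Cop := by
  classical
  set K := kerMatrix Φ d x with hKdef
  set kv := kerVec Φ d x xx with hkvdef
  set w := K⁻¹ *ᵥ kv with hwdef
  -- basic facts about K
  have hKsymm : Kᵀ = K := by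
    ext i j
    simp [hKdef, kerMatrix, Matrix.transpose_apply, real_inner_comm]
  have hdet : IsUnit K.det := by
    simpa [isUnit_iff_ne_zero] using (ne_of_gt hKXpos.det_pos)
  have hKinv : K * K⁻¹ = 1 := Matrix.mul_nonsing_inv K hdet
  have hKinv' : K⁻¹ * K = 1 := Matrix.nonsing_inv_mul K hdet
  have hKw : K *ᵥ w = kv := by
    rw [hwdef, Matrix.mulVec_mulVec, hKinv, Matrix.one_mulVec]
  -- the Euclidean norm
  set N : (Fin d → ℝ) → ℝ := fun v => Real.sqrt (∑ i, v i ^ 2) with hNdef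
  have hNnonneg : ∀ v, 0 ≤ N v := fun v => Real.sqrt_nonneg _
  have hNsq : ∀ v : Fin d → ℝ, N v ^ 2 = ∑ i, v i ^ 2 := fun v =>
    Real.sq_sqrt (by positivity)
  have hNpos : ∀ v : Fin d → ℝ, v ≠ 0 → 0 < N v := by
    intro v hv
    rcases (hNnonneg v).lt_or_eq with h | h
    · exact h
    · exfalso
      apply hv
      have h0 : ∑ i, v i ^ 2 = 0 := by
        have h2 := hNsq v
        rw [← h] at h2
        simpa using h2.symm
      funext i
      have := (Finset.sum_eq_zero_iff_of_nonneg
        (fun i _ => sq_nonneg (v i))).1 h0 i (Finset.mem_univ i)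
      exact pow_eq_zero_iff (two_ne_zero) |>.1 this
  have hCS : ∀ u v : Fin d → ℝ, |u ⬝ᵥ v| ≤ N u * N v := by
    intro u v
    have h := Finset.sum_mul_sq_le_sq_mul_sq Finset.univ u v
    have h2 : |∑ i, u i * v i| ≤ Real.sqrt ((∑ i, u i ^ 2) * ∑ i, v i ^ 2) := by
      rw [← Real.sqrt_sq_eq_abs]
      exact Real.sqrt_le_sqrt h
    simpa [dotProduct, hNdef,
      Real.sqrt_mul (by positivity : (0:ℝ) ≤ ∑ i, u i ^ 2)] using h2
  have hdotself : ∀ v : Fin d → ℝ, v ⬝ᵥ v = N v ^ 2 := by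
    intro v
    rw [hNsq]
    simp [dotProduct, sq]
  -- the synthesis map
  set T : (Fin d → ℝ) → H := fun c => ∑ i, c i • Φ (x i) with hTdef
  have hTΦ : ∀ (c : Fin d → ℝ) (z : EuclideanSpace ℝ (Fin n)),
      ⟪T c, Φ z⟫ = ∑ i, c i * ⟪Φ (x i), Φ z⟫ := by
    intro c z
    simp [hTdef, sum_inner, real_inner_smul_left]
  have hTx : ∀ (c : Fin d → ℝ) (j : Fin d), ⟪T c, Φ (x j)⟫ = (K *ᵥ c) j := by
    intro c j
    rw [hTΦ]
    simp only [Matrix.mulVec, dotProduct, hKdef, kerMatrix, Matrix.of_apply]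
    exact Finset.sum_congr rfl fun i _ => by rw [real_inner_comm, mul_comm]
  have hTxx : ∀ c : Fin d → ℝ, ⟪T c, Φ xx⟫ = c ⬝ᵥ kv := by
    intro c
    rw [hTΦ]
    simp [dotProduct, hkvdef, kerVec]
  have hTT : ∀ c c' : Fin d → ℝ, ⟪T c, T c'⟫ = c' ⬝ᵥ (K *ᵥ c) := by
    intro c c'
    have h1 : ⟪T c, T c'⟫ = ∑ j, c' j * ⟪T c, Φ (x j)⟫ := by
      conv_lhs => rw [show T c' = ∑ j, c' j • Φ (x j) from rfl]
      rw [inner_sum]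
      exact Finset.sum_congr rfl fun j _ => by rw [real_inner_smul_right]
    rw [h1]
    simp only [hTx]
    rfl
  have hTne : ∀ c : Fin d → ℝ, c ≠ 0 → T c ≠ 0 := by
    intro c hc hTc
    have hpos : 0 < c ⬝ᵥ (K *ᵥ c) := by
      have := hKXpos.dotProduct_mulVec_pos hc
      simpa using this
    rw [← hTT c c, hTc, inner_zero_left] at hpos
    exact lt_irrefl 0 hpos
  have hTmem : ∀ c : Fin d → ℝ,
      T c ∈ Submodule.span ℝ (Set.range fun i => Φ (x i)) :=
    fun c => Submodule.sum_mem _ fun i _ => Submodule.smul_mem _ _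
      (Submodule.subset_span ⟨i, rfl⟩)
  -- dot product manipulation: c ⬝ᵥ kv = (K *ᵥ c) ⬝ᵥ w
  have hswap : ∀ c : Fin d → ℝ, c ⬝ᵥ kv = (K *ᵥ c) ⬝ᵥ w := by
    intro c
    rw [← hKw, Matrix.dotProduct_mulVec, ← Matrix.mulVec_transpose, hKsymm]
  -- evaluation formulas
  have hevx : ∀ (c : Fin d → ℝ) (j : Fin d), ev (T c) (x j) = (K *ᵥ c) j := by
    intro c j
    rw [hrepr (T c) (x j) (hxΩ j), hTx]
  have hevxx : ∀ c : Fin d → ℝ, ev (T c) xx = (K *ᵥ c) ⬝ᵥ w := by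
    intro c
    rw [hrepr (T c) xx hxx, hTxx, hswap]
  have hevnorm : ∀ c : Fin d → ℝ,
      Real.sqrt (∑ j, (ev (T c) (x j)) ^ 2) = N (K *ᵥ c) := by
    intro c
    simp only [hNdef]
    congr 1
    exact Finset.sum_congr rfl fun j _ => by rw [hevx c j]
  -- the set S
  set S : Set ℝ := {r : ℝ | ∃ f : H,
      f ∈ Submodule.span ℝ (Set.range fun i => Φ (x i)) ∧ f ≠ 0 ∧
      r = |ev f xx| / Real.sqrt (∑ j, (ev f (x j)) ^ 2)} with hSdef
  have hub : ∀ r ∈ S, r ≤ N w := by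
    rintro r ⟨f, hfspan, hfne, rfl⟩
    obtain ⟨c, rfl⟩ := (Submodule.mem_span_range_iff_exists_fun ℝ).1 hfspan
    have hc : c ≠ 0 := by
      rintro rfl
      exact hfne (by simp)
    have hKc : K *ᵥ c ≠ 0 := by
      intro h
      apply hc
      have h2 : K⁻¹ *ᵥ (K *ᵥ c) = c := by
        rw [Matrix.mulVec_mulVec, hKinv', Matrix.one_mulVec]
      rw [h, Matrix.mulVec_zero] at h2
      exact h2.symm
    have hNv : 0 < N (K *ᵥ c) := hNpos _ hKc
    have hTc : (∑ i, c i • Φ (x i)) = T c := rfl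
    rw [hTc, hevnorm c, div_le_iff₀ hNv, hevxx c, mul_comm]
    exact hCS _ _
  have hSnonempty : S.Nonempty := by
    set i0 : Fin d := ⟨0, hd⟩
    set c0 : Fin d → ℝ := Pi.single i0 1 with hc0
    have hc0ne : c0 ≠ 0 := by
      intro h
      have := congrFun h i0
      simp [hc0] at this
    exact ⟨_, ⟨T c0, hTmem c0, hTne c0 hc0ne, rfl⟩⟩
  have hnonneg : ∀ r ∈ S, 0 ≤ r := by
    rintro r ⟨f, _, _, rfl⟩
    positivity
  -- Part 1
  have part1 : N w = sSup S := by
    by_cases hw0 : w = 0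
    · have hNw : N w = 0 := by
        simp [hNdef, hw0]
      have hub0 : ∀ r ∈ S, r ≤ 0 := fun r hr => hNw ▸ hub r hr
      have hsup : sSup S = 0 := by
        refine le_antisymm (csSup_le hSnonempty hub0) ?_
        obtain ⟨r, hr⟩ := hSnonempty
        have h0 : r = 0 := le_antisymm (hub0 r hr) (hnonneg r hr)
        rw [← h0]
        exact le_csSup ⟨0, hub0⟩ hr
      rw [hNw, hsup]
    · refine le_antisymm ?_ (csSup_le hSnonempty hub)
      set c : Fin d → ℝ := K⁻¹ *ᵥ w with hcdef
      have hKc : K *ᵥ c = w := by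
        rw [hcdef, Matrix.mulVec_mulVec, hKinv, Matrix.one_mulVec]
      have hc : c ≠ 0 := by
        intro h
        apply hw0
        rw [← hKc, h, Matrix.mulVec_zero]
      have hmem : N w ∈ S := by
        refine ⟨T c, hTmem c, hTne c hc, ?_⟩
        rw [hevnorm c, hKc, hevxx c, hKc, hdotself w,
          abs_of_nonneg (sq_nonneg _)]
        rw [sq]
        rw [mul_div_assoc, div_self (ne_of_gt (hNpos w hw0)), mul_one]
      exact le_csSup ⟨N w, hub⟩ hmem
  -- Part 2
  have hMk0 : 0 ≤ Mk := le_trans (abs_nonneg _) (hMk xx hxx xx hxx)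
  have hCop0 : 0 ≤ Cop := by
    set v0 : Fin d → ℝ := Pi.single ⟨0, hd⟩ 1 with hv0
    have hv0ne : v0 ≠ 0 := by
      intro h
      have := congrFun h ⟨0, hd⟩
      simp [hv0] at this
    have h1 := hCop v0
    have h2 : 0 ≤ Real.sqrt (∑ i, ((K⁻¹ *ᵥ v0) i) ^ 2) := Real.sqrt_nonneg _
    have h3 : 0 < Real.sqrt (∑ i, (v0 i) ^ 2) := hNpos v0 hv0ne
    nlinarith
  have hΦxx : ‖Φ xx‖ ≤ Real.sqrt Mk := by
    rw [← Real.sqrt_sq (norm_nonneg (Φ xx))]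
    apply Real.sqrt_le_sqrt
    calc ‖Φ xx‖ ^ 2 = ⟪Φ xx, Φ xx⟫ := (real_inner_self_eq_norm_sq _).symm
      _ ≤ |⟪Φ xx, Φ xx⟫| := le_abs_self _
      _ ≤ Mk := hMk xx hxx xx hxx
  have hgle : ‖T w‖ ≤ Real.sqrt Mk := by
    have hsq : ‖T w‖ ^ 2 = ⟪T w, Φ xx⟫ := by
      rw [← real_inner_self_eq_norm_sq, hTT w w, hKw]
      exact (hTxx w).symm
    have hCS2 : ‖T w‖ ^ 2 ≤ ‖T w‖ * ‖Φ xx‖ := by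
      rw [hsq]
      exact real_inner_le_norm _ _
    rcases (norm_nonneg (T w)).lt_or_eq with h | h
    · have : ‖T w‖ ≤ ‖Φ xx‖ := by
        rw [sq] at hCS2
        exact le_of_mul_le_mul_left hCS2 h
      exact this.trans hΦxx
    · rw [← h]
      exact Real.sqrt_nonneg _
  set c2 : Fin d → ℝ := K⁻¹ *ᵥ w with hc2def
  have hKc2 : K *ᵥ c2 = w := by
    rw [hc2def, Matrix.mulVec_mulVec, hKinv, Matrix.one_mulVec]
  have hc2N : N c2 ≤ Cop * N w := hCop w
  have h1 : ‖T c2‖ ^ 2 ≤ Cop * N w ^ 2 := by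
    rw [← real_inner_self_eq_norm_sq, hTT c2 c2, hKc2]
    calc c2 ⬝ᵥ w ≤ |c2 ⬝ᵥ w| := le_abs_self _
      _ ≤ N c2 * N w := hCS _ _
      _ ≤ (Cop * N w) * N w := by
          apply mul_le_mul_of_nonneg_right hc2N (hNnonneg w)
      _ = Cop * N w ^ 2 := by ring
  have h2 : ‖T c2‖ ≤ Real.sqrt Cop * N w := by
    rw [← Real.sqrt_sq (norm_nonneg (T c2))]
    calc Real.sqrt (‖T c2‖ ^ 2) ≤ Real.sqrt (Cop * N w ^ 2) := Real.sqrt_le_sqrt h1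
      _ = Real.sqrt Cop * N w := by
          rw [Real.sqrt_mul hCop0, Real.sqrt_sq (hNnonneg w)]
  have main : N w ^ 2 ≤ (Real.sqrt Cop * N w) * Real.sqrt Mk := by
    have hww : N w ^ 2 = ⟪T c2, T w⟫ := by
      rw [hTT c2 w, hKc2, hdotself w]
    rw [hww]
    calc ⟪T c2, T w⟫ ≤ ‖T c2‖ * ‖T w‖ := real_inner_le_norm _ _
      _ ≤ (Real.sqrt Cop * N w) * Real.sqrt Mk := by
          apply mul_le_mul h2 hgle (norm_nonneg _)
          positivity
  have part2 : N w ≤ Real.sqrt Mk * Real.sqrt Cop := by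
    rcases (hNnonneg w).lt_or_eq with h | h
    · have : N w * N w ≤ (Real.sqrt Mk * Real.sqrt Cop) * N w := by
        rw [← sq]
        calc N w ^ 2 ≤ (Real.sqrt Cop * N w) * Real.sqrt Mk := main
          _ = (Real.sqrt Mk * Real.sqrt Cop) * N w := by ring
      exact le_of_mul_le_mul_right this h
    · rw [← h]
      positivity
  exact ⟨part1, part2⟩

end
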